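/- For a positive integer n, the Diophantine equation x(x−1)/2 + y(y−1)/2 + 6·z(z−1)/2 = n has an integer solution (x,y,z) ∈ ℤ³ if and only if there is no positive integer r such that n ≡ 2·3^{2r−1} − 1 (mod 3^{2r}). -/

import Mathlib

/-! Ternary quadratic form machinery -/

structure QF3 where
  a : ℤ
  b : ℤ
  c : ℤ
  u : ℤ
  v : ℤ
  w : ℤ

namespace QF3

/-- value of the form: matrix [[a,u,v],[u,b,w],[v,w,c]] -/
def val (F : QF3) (x y z : ℤ) : ℤ :=
  F.a*x^2 + F.b*y^2 + F.c*z^2 + 2*F.u*x*y + 2*F.v*x*z + 2*F.w*y*z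

def bil (F : QF3) (x₁ y₁ z₁ x₂ y₂ z₂ : ℤ) : ℤ :=
  F.a*x₁*x₂ + F.b*y₁*y₂ + F.c*z₁*z₂ + F.u*(x₁*y₂+x₂*y₁) + F.v*(x₁*z₂+x₂*z₁) + F.w*(y₁*z₂+y₂*z₁)

def det (F : QF3) : ℤ :=
  F.a*F.b*F.c + 2*F.u*F.v*F.w - F.a*F.w^2 - F.b*F.v^2 - F.c*F.u^2

def PosDef (F : QF3) : Prop :=
  ∀ x y z : ℤ, ¬(x = 0 ∧ y = 0 ∧ z = 0) → 0 < F.val x y z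

end QF3

structure M3 where
  p11 : ℤ
  p12 : ℤ
  p13 : ℤ
  p21 : ℤ
  p22 : ℤ
  p23 : ℤ
  p31 : ℤ
  p32 : ℤ
  p33 : ℤ

namespace M3

def det (T : M3) : ℤ :=
  T.p11*(T.p22*T.p33 - T.p23*T.p32) - T.p12*(T.p21*T.p33 - T.p23*T.p31)
    + T.p13*(T.p21*T.p32 - T.p22*T.p31)

def mul (S T : M3) : M3 :=
  ⟨S.p11*T.p11 + S.p12*T.p21 + S.p13*T.p31,
   S.p11*T.p12 + S.p12*T.p22 + S.p13*T.p32,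
   S.p11*T.p13 + S.p12*T.p23 + S.p13*T.p33,
   S.p21*T.p11 + S.p22*T.p21 + S.p23*T.p31,
   S.p21*T.p12 + S.p22*T.p22 + S.p23*T.p32,
   S.p21*T.p13 + S.p22*T.p23 + S.p23*T.p33,
   S.p31*T.p11 + S.p32*T.p21 + S.p33*T.p31,
   S.p31*T.p12 + S.p32*T.p22 + S.p33*T.p32,
   S.p31*T.p13 + S.p32*T.p23 + S.p33*T.p33⟩

/-- adjugate -/
def adj (T : M3) : M3 :=
  ⟨T.p22*T.p33 - T.p23*T.p32, T.p13*T.p32 - T.p12*T.p33, T.p12*T.p23 - T.p13*T.p22,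
   T.p23*T.p31 - T.p21*T.p33, T.p11*T.p33 - T.p13*T.p31, T.p13*T.p21 - T.p11*T.p23,
   T.p21*T.p32 - T.p22*T.p31, T.p12*T.p31 - T.p11*T.p32, T.p11*T.p22 - T.p12*T.p21⟩

/-- act on quadratic form by substitution (x,y,z) ↦ T·(x,y,z) (columns are images of basis) -/
def act (T : M3) (F : QF3) : QF3 :=
  ⟨F.val T.p11 T.p21 T.p31,
   F.val T.p12 T.p22 T.p32,
   F.val T.p13 T.p23 T.p33,
   F.bil T.p11 T.p21 T.p31 T.p12 T.p22 T.p32,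
   F.bil T.p11 T.p21 T.p31 T.p13 T.p23 T.p33,
   F.bil T.p12 T.p22 T.p32 T.p13 T.p23 T.p33⟩

theorem act_val (T : M3) (F : QF3) (x y z : ℤ) :
    (T.act F).val x y z
      = F.val (T.p11*x + T.p12*y + T.p13*z) (T.p21*x + T.p22*y + T.p23*z)
          (T.p31*x + T.p32*y + T.p33*z) := by
  simp only [act, QF3.val, QF3.bil]; ring

theorem act_det (T : M3) (F : QF3) : (T.act F).det = T.det^2 * F.det := by
  simp only [act, QF3.det, QF3.val, QF3.bil, det]; ring

theorem act_act (S T : M3) (F : QF3) : T.act (S.act F) = (S.mul T).act F := by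
  simp only [act, QF3.det, QF3.val, QF3.bil, det, mul]
  refine QF3.mk.injEq .. ▸ ⟨by ring, by ring, by ring, by ring, by ring, by ring⟩

theorem mul_det (S T : M3) : (S.mul T).det = S.det * T.det := by
  simp only [mul, det]; ring

theorem mul_adj (T : M3) : T.mul T.adj
    = ⟨T.det, 0, 0, 0, T.det, 0, 0, 0, T.det⟩ := by
  simp only [mul, adj, det]
  refine M3.mk.injEq .. ▸ ⟨by ring, by ring, by ring, by ring, by ring, by ring, by ring, by ring, by ring⟩

theorem adj_det (T : M3) : T.adj.det = T.det ^ 2 := by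
  simp only [adj, det]; ring

end M3

def QF3.Equiv (F G : QF3) : Prop := ∃ T : M3, (T.det = 1 ∨ T.det = -1) ∧ T.act F = G

namespace QF3

theorem Equiv.refl (F : QF3) : F.Equiv F := by
  refine ⟨⟨1,0,0,0,1,0,0,0,1⟩, Or.inl (by simp [M3.det]), ?_⟩
  simp only [M3.act, QF3.val, QF3.bil]
  cases F
  simp

theorem Equiv.trans {F G H : QF3} (h₁ : F.Equiv G) (h₂ : G.Equiv H) : F.Equiv H := by
  obtain ⟨S, hS, rfl⟩ := h₁
  obtain ⟨T, hT, rfl⟩ := h₂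
  exact ⟨S.mul T, by rcases hS with h|h <;> rcases hT with h'|h' <;>
    simp [M3.mul_det, h, h'], (M3.act_act S T F).symm⟩

theorem Equiv.symm {F G : QF3} (h : F.Equiv G) : G.Equiv F := by
  obtain ⟨T, hT, rfl⟩ := h
  refine ⟨T.adj, ?_, ?_⟩
  · rw [M3.adj_det]; rcases hT with h|h <;> simp [h]
  · rw [M3.act_act, M3.mul_adj]
    have : (⟨T.det, 0, 0, 0, T.det, 0, 0, 0, T.det⟩ : M3).act F = F := by
      simp only [M3.act, QF3.val, QF3.bil]
      cases F
      rcases hT with h|h <;> simp [h]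
    rw [this]

end QF3


/-! Binary quadratic form machinery -/

structure QF2 where
  a : ℤ
  b : ℤ
  u : ℤ

namespace QF2

def val (C : QF2) (x y : ℤ) : ℤ := C.a*x^2 + C.b*y^2 + 2*C.u*x*y

def det (C : QF2) : ℤ := C.a*C.b - C.u^2

def PosDef (C : QF2) : Prop := ∀ x y : ℤ, ¬(x = 0 ∧ y = 0) → 0 < C.val x y

end QF2

structure M2 where
  p11 : ℤ
  p12 : ℤ
  p21 : ℤ
  p22 : ℤ

namespace M2

def det (T : M2) : ℤ := T.p11*T.p22 - T.p12*T.p21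

def act (T : M2) (C : QF2) : QF2 :=
  ⟨C.val T.p11 T.p21, C.val T.p12 T.p22,
   C.a*T.p11*T.p12 + C.b*T.p21*T.p22 + C.u*(T.p11*T.p22 + T.p12*T.p21)⟩

theorem act_val (T : M2) (C : QF2) (x y : ℤ) :
    (T.act C).val x y = C.val (T.p11*x + T.p12*y) (T.p21*x + T.p22*y) := by
  simp only [act, QF2.val]; ring

theorem act_det (T : M2) (C : QF2) : (T.act C).det = T.det^2 * C.det := by
  simp only [act, QF2.val, QF2.det, det]; ring

end M2

namespace QF2

def Equiv (C D : QF2) : Prop := ∃ T : M2, (T.det = 1 ∨ T.det = -1) ∧ T.act C = D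

theorem Equiv.det_eq {C D : QF2} (h : C.Equiv D) : C.det = D.det := by
  obtain ⟨T, hT, rfl⟩ := h
  rw [M2.act_det]; rcases hT with h|h <;> rw [h] <;> ring

/-- Values of an equivalent form at nonzero vectors are values of the original at
nonzero vectors. -/
theorem Equiv.val_sub {C D : QF2} (h : C.Equiv D) (x y : ℤ) (hxy : ¬(x = 0 ∧ y = 0)) :
    ∃ X Y : ℤ, ¬(X = 0 ∧ Y = 0) ∧ D.val x y = C.val X Y := by
  obtain ⟨T, hT, rfl⟩ := h
  refine ⟨T.p11*x + T.p12*y, T.p21*x + T.p22*y, ?_, M2.act_val T C x y⟩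
  rintro ⟨h1, h2⟩
  apply hxy
  have e1 : T.det * x = T.p22 * (T.p11*x + T.p12*y) - T.p12 * (T.p21*x + T.p22*y) := by
    simp only [M2.det]; ring
  have e2 : T.det * y = -T.p21 * (T.p11*x + T.p12*y) + T.p11 * (T.p21*x + T.p22*y) := by
    simp only [M2.det]; ring
  rw [h1, h2] at e1 e2
  rcases hT with h|h <;> rw [h] at e1 e2 <;> constructor <;> omega

theorem Equiv.posDef {C D : QF2} (h : C.Equiv D) (hC : C.PosDef) : D.PosDef := by
  intro x y hxy
  obtain ⟨X, Y, hXY, hval⟩ := h.val_sub x y hxy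
  rw [hval]; exact hC X Y hXY

theorem Equiv.refl (C : QF2) : C.Equiv C := by
  refine ⟨⟨1,0,0,1⟩, Or.inl (by simp [M2.det]), ?_⟩
  simp only [M2.act, QF2.val]; cases C; simp

theorem Equiv.trans {C D E : QF2} (h₁ : C.Equiv D) (h₂ : D.Equiv E) : C.Equiv E := by
  obtain ⟨S, hS, rfl⟩ := h₁
  obtain ⟨T, hT, rfl⟩ := h₂
  refine ⟨⟨S.p11*T.p11 + S.p12*T.p21, S.p11*T.p12 + S.p12*T.p22,
           S.p21*T.p11 + S.p22*T.p21, S.p21*T.p12 + S.p22*T.p22⟩, ?_, ?_⟩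
  · have : (⟨S.p11*T.p11 + S.p12*T.p21, S.p11*T.p12 + S.p12*T.p22,
           S.p21*T.p11 + S.p22*T.p21, S.p21*T.p12 + S.p22*T.p22⟩ : M2).det = S.det * T.det := by
      simp only [M2.det]; ring
    rw [this]
    rcases hS with h|h <;> rcases hT with h'|h' <;> rw [h, h'] <;> norm_num
  · simp only [M2.act, QF2.val]
    refine QF2.mk.injEq .. ▸ ⟨by ring, by ring, by ring⟩

theorem Equiv.symm {C D : QF2} (h : C.Equiv D) : D.Equiv C := by
  obtain ⟨T, hT, rfl⟩ := h
  obtain ⟨t11, t12, t21, t22⟩ := T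
  obtain ⟨a, b, u⟩ := C
  simp only [M2.det] at hT
  refine ⟨⟨t22, -t12, -t21, t11⟩, ?_, ?_⟩
  · simp only [M2.det]
    rcases hT with h|h <;> [left; right] <;> linarith
  · simp only [M2.act, QF2.val]
    rcases hT with h|h <;> refine QF2.mk.injEq .. ▸ ⟨?_, ?_, ?_⟩
    · linear_combination (a * (t11*t22 - t12*t21 + 1)) * h
    · linear_combination (b * (t11*t22 - t12*t21 + 1)) * h
    · linear_combination (u * (t11*t22 - t12*t21 + 1)) * h
    · linear_combination (a * (t11*t22 - t12*t21 - 1)) * h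
    · linear_combination (b * (t11*t22 - t12*t21 - 1)) * h
    · linear_combination (u * (t11*t22 - t12*t21 - 1)) * h

/-- existence of a minimal nonzero value vector for a positive definite binary form -/
theorem exists_min (C : QF2) (hC : C.PosDef) :
    ∃ x y : ℤ, ¬(x = 0 ∧ y = 0) ∧ ∀ x' y' : ℤ, ¬(x' = 0 ∧ y' = 0) →
      C.val x y ≤ C.val x' y' := by
  classical
  have h10 : ¬((1:ℤ) = 0 ∧ (0:ℤ) = 0) := by simp
  set S : Set ℕ := {k | ∃ x y : ℤ, ¬(x = 0 ∧ y = 0) ∧ C.val x y = k} with hS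
  have hne : (C.val 1 0).toNat ∈ S := by
    refine ⟨1, 0, h10, ?_⟩
    have := hC 1 0 h10; omega
  obtain ⟨x, y, hxy, hval⟩ := Nat.sInf_mem (Set.nonempty_of_mem hne)
  refine ⟨x, y, hxy, fun x' y' h' => ?_⟩
  have h1 : (C.val x' y').toNat ∈ S := by
    refine ⟨x', y', h', ?_⟩
    have := hC x' y' h'; omega
  have h2 := Nat.sInf_le h1
  have := hC x' y' h'
  omega

end QF2

namespace QF2

theorem val_one_zero (C : QF2) : C.val 1 0 = C.a := by simp [val]
theorem val_zero_one (C : QF2) : C.val 0 1 = C.b := by simp [val]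

/-- Any positive definite binary form is equivalent to a reduced one whose
leading coefficient is the minimum of the original form. -/
theorem exists_reduced (C : QF2) (hC : C.PosDef) :
    ∃ D : QF2, C.Equiv D ∧ 0 < D.a ∧ 2*|D.u| ≤ D.a ∧ D.a ≤ D.b ∧
      (∀ x y : ℤ, ¬(x = 0 ∧ y = 0) → D.a ≤ C.val x y) := by
  obtain ⟨x₀, y₀, hxy₀, hmin⟩ := exists_min C hC
  set m := C.val x₀ y₀ with hm
  have hmpos : 0 < m := hC x₀ y₀ hxy₀
  -- the minimal vector is primitive
  have hprim : Int.gcd x₀ y₀ = 1 := by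
    by_contra hne
    obtain ⟨x₁, hx₁⟩ : (Int.gcd x₀ y₀ : ℤ) ∣ x₀ := Int.gcd_dvd_left _ _
    obtain ⟨y₁, hy₁⟩ : (Int.gcd x₀ y₀ : ℤ) ∣ y₀ := Int.gcd_dvd_right _ _
    set g : ℤ := (Int.gcd x₀ y₀ : ℤ) with hg
    have hg0 : Int.gcd x₀ y₀ ≠ 0 := by
      intro h0
      exact hxy₀ ⟨Int.gcd_eq_zero_iff.mp h0 |>.1, Int.gcd_eq_zero_iff.mp h0 |>.2⟩
    have hg2 : 2 ≤ g := by
      have h5 : 2 ≤ Int.gcd x₀ y₀ := by omega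
      rw [hg]
      exact_mod_cast h5
    have h1 : ¬(x₁ = 0 ∧ y₁ = 0) := by
      rintro ⟨rfl, rfl⟩
      exact hxy₀ ⟨by simpa using hx₁, by simpa using hy₁⟩
    have hval : m = g^2 * C.val x₁ y₁ := by
      rw [hm, hx₁, hy₁]; simp only [val]; ring
    have h2 := hmin x₁ y₁ h1
    have h3 := hC x₁ y₁ h1
    have hg4 : (4:ℤ) ≤ g^2 := by nlinarith
    have h4 : 4 * C.val x₁ y₁ ≤ g^2 * C.val x₁ y₁ :=
      mul_le_mul_of_nonneg_right hg4 h3.le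
    linarith
  -- complete to a basis
  have hBez : x₀ * Int.gcdA x₀ y₀ + y₀ * Int.gcdB x₀ y₀ = 1 := by
    have := Int.gcd_eq_gcd_ab x₀ y₀
    rw [hprim] at this
    exact_mod_cast this.symm
  set s := Int.gcdA x₀ y₀
  set t := Int.gcdB x₀ y₀
  set T : M2 := ⟨x₀, -t, y₀, s⟩ with hT
  have hTdet : T.det = 1 := by simp only [hT, M2.det]; linarith
  set C₁ := T.act C with hC₁
  have hequiv₁ : C.Equiv C₁ := ⟨T, Or.inl hTdet, rfl⟩
  have hC₁a : C₁.a = m := by simp only [hC₁, hT, M2.act]; rfl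
  -- choose the shear amount
  obtain ⟨q, hq1, hq2⟩ : ∃ q : ℤ, -m ≤ 2*(C₁.u + m*q) ∧ 2*(C₁.u + m*q) ≤ m := by
    have hdm := Int.emod_add_mul_ediv C₁.u m
    have hr0 : 0 ≤ C₁.u % m := Int.emod_nonneg _ (by omega)
    have hr1 : C₁.u % m < m := Int.emod_lt_of_pos _ hmpos
    by_cases h : 2*(C₁.u % m) ≤ m
    · refine ⟨-(C₁.u / m), ?_, ?_⟩ <;>
      · have : C₁.u + m * -(C₁.u / m) = C₁.u % m := by linear_combination hdm.symm
        omega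
    · refine ⟨-(C₁.u / m) - 1, ?_, ?_⟩ <;>
      · have : C₁.u + m * (-(C₁.u / m) - 1) = C₁.u % m - m := by linear_combination hdm.symm
        omega
  set T₂ : M2 := ⟨1, q, 0, 1⟩ with hT₂
  have hT₂det : T₂.det = 1 := by simp [hT₂, M2.det]
  set D := T₂.act C₁ with hD
  have hequiv : C.Equiv D := hequiv₁.trans ⟨T₂, Or.inl hT₂det, rfl⟩
  have hDa : D.a = m := by
    have h : D.a = C₁.a := by simp only [hD, hT₂, M2.act, val]; ring
    rw [h, hC₁a]
  have hDu : D.u = C₁.u + m*q := by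
    have h : D.u = C₁.a*q + C₁.u := by simp only [hD, hT₂, M2.act, val]; ring
    rw [h, hC₁a]; ring
  have hDb : m ≤ D.b := by
    obtain ⟨X, Y, hXY, hval⟩ := hequiv.val_sub 0 1 (by simp)
    rw [val_zero_one] at hval
    rw [hval]; exact hmin X Y hXY
  refine ⟨D, hequiv, ?_, ?_, ?_, ?_⟩
  · rw [hDa]; exact hmpos
  · rw [hDa, hDu]
    have habs : |2*(C₁.u + m*q)| ≤ m := abs_le.mpr ⟨hq1, hq2⟩
    rw [abs_mul] at habs
    have : |(2:ℤ)| = 2 := by norm_num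
    rw [this] at habs
    exact habs
  · rw [hDa]; exact hDb
  · intro x y h
    rw [hDa]; exact hmin x y h

/-- Binary Hermite inequality with attained minimum. -/
theorem min_bound (C : QF2) (hC : C.PosDef) :
    ∃ x y : ℤ, ¬(x = 0 ∧ y = 0) ∧ 3*(C.val x y)^2 ≤ 4*C.det ∧
      (∀ x' y' : ℤ, ¬(x' = 0 ∧ y' = 0) → C.val x y ≤ C.val x' y') := by
  obtain ⟨x₀, y₀, hxy₀, hmin⟩ := exists_min C hC
  obtain ⟨D, hEq, ha, hu, hab, hDmin⟩ := exists_reduced C hC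
  have h1 : D.a = C.val x₀ y₀ := by
    obtain ⟨X, Y, hXY, hval⟩ := hEq.val_sub 1 0 (by simp)
    rw [val_one_zero] at hval
    have h2 := hmin X Y hXY
    have h3 := hDmin x₀ y₀ hxy₀
    omega
  refine ⟨x₀, y₀, hxy₀, ?_, hmin⟩
  have hdet : C.det = D.det := hEq.det_eq
  rw [hdet, ← h1]
  have habs : 4*D.u^2 ≤ D.a^2 := by nlinarith [sq_abs D.u, abs_nonneg D.u, hu]
  simp only [det]
  nlinarith [mul_le_mul_of_nonneg_left hab ha.le]

/-- classification of positive definite binary forms of determinant 3 -/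
theorem det_three_classes (C : QF2) (hC : C.PosDef) (hdet : C.det = 3) :
    C.Equiv ⟨1, 3, 0⟩ ∨ C.Equiv ⟨2, 2, 1⟩ := by
  obtain ⟨D, hEq, ha, hu, hab, hDmin⟩ := exists_reduced C hC
  have hdet' : D.det = 3 := by rw [← hEq.det_eq, hdet]
  obtain ⟨a, b, u⟩ := D
  simp only [det] at hdet'
  simp only at ha hu hab
  have habs : 4*u^2 ≤ a^2 := by nlinarith [sq_abs u, abs_nonneg u, hu]
  have ha2 : a ≤ 2 := by nlinarith [mul_le_mul_of_nonneg_left hab ha.le]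
  interval_cases a
  · -- a = 1 : u = 0, b = 3
    have h1 : |u| = 0 := by have := abs_nonneg u; omega
    rw [abs_eq_zero] at h1
    subst h1
    have : b = 3 := by omega
    subst this
    exact Or.inl hEq
  · -- a = 2
    have h1 : |u| ≤ 1 := by omega
    have h2 := abs_le.mp h1
    have hu' : u = -1 ∨ u = 0 ∨ u = 1 := by omega
    rcases hu' with rfl|rfl|rfl
    · have : b = 2 := by omega
      subst this
      refine Or.inr (hEq.trans ⟨⟨1, 0, 0, -1⟩, Or.inr (by simp [M2.det]), ?_⟩)
      simp only [M2.act, val]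
      refine QF2.mk.injEq .. ▸ ⟨by ring, by ring, by ring⟩
    · omega
    · have : b = 2 := by omega
      subst this
      exact Or.inr hEq

end QF2


/-- helper: nearest-integer shear -/
theorem exists_shear (a s : ℤ) (ha : 0 < a) :
    ∃ x : ℤ, -a ≤ 2*(a*x + s) ∧ 2*(a*x + s) ≤ a := by
  have hdm := Int.emod_add_mul_ediv s a
  have hr0 : 0 ≤ s % a := Int.emod_nonneg _ (by omega)
  have hr1 : s % a < a := Int.emod_lt_of_pos _ ha
  by_cases h : 2*(s % a) ≤ a
  · refine ⟨-(s / a), ?_, ?_⟩ <;>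
    · have : a * -(s / a) + s = s % a := by linear_combination hdm.symm
      omega
  · refine ⟨-(s / a) - 1, ?_, ?_⟩ <;>
    · have : a * (-(s / a) - 1) + s = s % a - a := by linear_combination hdm.symm
      omega

namespace QF3

theorem Equiv.det_eq {F G : QF3} (h : F.Equiv G) : F.det = G.det := by
  obtain ⟨T, hT, rfl⟩ := h
  rw [M3.act_det]; rcases hT with h|h <;> rw [h] <;> ring

theorem Equiv.val_sub {F G : QF3} (h : F.Equiv G) (x y z : ℤ) (hxyz : ¬(x = 0 ∧ y = 0 ∧ z = 0)) :
    ∃ X Y Z : ℤ, ¬(X = 0 ∧ Y = 0 ∧ Z = 0) ∧ G.val x y z = F.val X Y Z := by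
  obtain ⟨T, hT, rfl⟩ := h
  refine ⟨T.p11*x + T.p12*y + T.p13*z, T.p21*x + T.p22*y + T.p23*z,
    T.p31*x + T.p32*y + T.p33*z, ?_, M3.act_val T F x y z⟩
  rintro ⟨h1, h2, h3⟩
  apply hxyz
  have e1 : T.det * x = (T.p22*T.p33 - T.p23*T.p32) * (T.p11*x + T.p12*y + T.p13*z)
      + (T.p13*T.p32 - T.p12*T.p33) * (T.p21*x + T.p22*y + T.p23*z)
      + (T.p12*T.p23 - T.p13*T.p22) * (T.p31*x + T.p32*y + T.p33*z) := by
    simp only [M3.det]; ring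
  have e2 : T.det * y = (T.p23*T.p31 - T.p21*T.p33) * (T.p11*x + T.p12*y + T.p13*z)
      + (T.p11*T.p33 - T.p13*T.p31) * (T.p21*x + T.p22*y + T.p23*z)
      + (T.p13*T.p21 - T.p11*T.p23) * (T.p31*x + T.p32*y + T.p33*z) := by
    simp only [M3.det]; ring
  have e3 : T.det * z = (T.p21*T.p32 - T.p22*T.p31) * (T.p11*x + T.p12*y + T.p13*z)
      + (T.p12*T.p31 - T.p11*T.p32) * (T.p21*x + T.p22*y + T.p23*z)
      + (T.p11*T.p22 - T.p12*T.p21) * (T.p31*x + T.p32*y + T.p33*z) := by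
    simp only [M3.det]; ring
  rw [h1, h2, h3] at e1 e2 e3
  rcases hT with h|h <;> rw [h] at e1 e2 e3 <;> refine ⟨?_, ?_, ?_⟩ <;> omega

theorem Equiv.posDef {F G : QF3} (h : F.Equiv G) (hF : F.PosDef) : G.PosDef := by
  intro x y z hxyz
  obtain ⟨X, Y, Z, hXYZ, hval⟩ := h.val_sub x y z hxyz
  rw [hval]; exact hF X Y Z hXYZ

theorem exists_min3 (F : QF3) (hF : F.PosDef) :
    ∃ x y z : ℤ, ¬(x = 0 ∧ y = 0 ∧ z = 0) ∧ ∀ x' y' z' : ℤ, ¬(x' = 0 ∧ y' = 0 ∧ z' = 0) →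
      F.val x y z ≤ F.val x' y' z' := by
  classical
  have h10 : ¬((1:ℤ) = 0 ∧ (0:ℤ) = 0 ∧ (0:ℤ) = 0) := by simp
  set S : Set ℕ := {k | ∃ x y z : ℤ, ¬(x = 0 ∧ y = 0 ∧ z = 0) ∧ F.val x y z = k} with hS
  have hne : (F.val 1 0 0).toNat ∈ S := by
    refine ⟨1, 0, 0, h10, ?_⟩
    have := hF 1 0 0 h10; omega
  obtain ⟨x, y, z, hxyz, hval⟩ := Nat.sInf_mem (Set.nonempty_of_mem hne)
  refine ⟨x, y, z, hxyz, fun x' y' z' h' => ?_⟩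
  have h1 : (F.val x' y' z').toNat ∈ S := by
    refine ⟨x', y', z', h', ?_⟩
    have := hF x' y' z' h'; omega
  have h2 := Nat.sInf_le h1
  have := hF x' y' z' h'
  omega

end QF3

/-- a primitive vector extends to a unimodular matrix (as first column) -/
theorem exists_unimodular_col (α β γ : ℤ) (h : Int.gcd (Int.gcd α β : ℤ) γ = 1) :
    ∃ T : M3, T.det = 1 ∧ T.p11 = α ∧ T.p21 = β ∧ T.p31 = γ := by
  by_cases hg : Int.gcd α β = 0
  · have hα : α = 0 := (Int.gcd_eq_zero_iff.mp hg).1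
    have hβ : β = 0 := (Int.gcd_eq_zero_iff.mp hg).2
    subst hα; subst hβ
    rw [hg] at h
    have hγ : γ = 1 ∨ γ = -1 := by
      have h1 : γ.natAbs = 1 := by simpa using h
      omega
    rcases hγ with rfl|rfl
    · exact ⟨⟨0, 1, 0, 0, 0, 1, 1, 0, 0⟩, by simp [M3.det], rfl, rfl, rfl⟩
    · exact ⟨⟨0, 1, 0, 0, 0, -1, -1, 0, 0⟩, by simp [M3.det], rfl, rfl, rfl⟩
  · set g : ℤ := (Int.gcd α β : ℤ) with hgdef
    have hgpos : 0 < g := by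
      have h0 : 0 < Int.gcd α β := Nat.pos_of_ne_zero hg
      rw [hgdef]
      exact_mod_cast h0
    obtain ⟨a', ha'⟩ : g ∣ α := Int.gcd_dvd_left _ _
    obtain ⟨b', hb'⟩ : g ∣ β := Int.gcd_dvd_right _ _
    have hBez : α * Int.gcdA α β + β * Int.gcdB α β = g := by
      rw [hgdef, Int.gcd_eq_gcd_ab α β]
    set s := Int.gcdA α β
    set t := Int.gcdB α β
    have hab1 : a' * s + b' * t = 1 := by
      have h2 : g * (a' * s + b' * t) = g * 1 := by
        rw [mul_one]
        calc g * (a' * s + b' * t) = α * s + β * t := by rw [ha', hb']; ring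
        _ = g := by linarith [hBez]
      exact mul_left_cancel₀ (by omega) h2
    have hBez2 : g * Int.gcdA g γ + γ * Int.gcdB g γ = 1 := by
      have h3 := Int.gcd_eq_gcd_ab g γ
      rw [h] at h3
      exact_mod_cast h3.symm
    set U := Int.gcdA g γ
    set W := Int.gcdB g γ
    refine ⟨⟨α, -t, -W*a', β, s, -W*b', γ, 0, U⟩, ?_, rfl, rfl, rfl⟩
    simp only [M3.det]
    linear_combination U * hBez + (γ*W) * hab1 + hBez2

namespace QF3

/-- corner minimal form -/
theorem exists_corner_min (F : QF3) (hF : F.PosDef) :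
    ∃ G : QF3, F.Equiv G ∧ 0 < G.a ∧
      (∀ x y z : ℤ, ¬(x = 0 ∧ y = 0 ∧ z = 0) → G.a ≤ G.val x y z) := by
  obtain ⟨x₀, y₀, z₀, h0, hmin⟩ := exists_min3 F hF
  set m := F.val x₀ y₀ z₀ with hm
  have hmpos : 0 < m := hF x₀ y₀ z₀ h0
  have hprim : Int.gcd (Int.gcd x₀ y₀ : ℤ) z₀ = 1 := by
    by_contra hne
    set gn := Int.gcd (Int.gcd x₀ y₀ : ℤ) z₀ with hgn
    have hd1 : (gn : ℤ) ∣ x₀ := dvd_trans (Int.gcd_dvd_left _ _) (Int.gcd_dvd_left _ _)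
    have hd2 : (gn : ℤ) ∣ y₀ := dvd_trans (Int.gcd_dvd_left _ _) (Int.gcd_dvd_right _ _)
    have hd3 : (gn : ℤ) ∣ z₀ := Int.gcd_dvd_right _ _
    have hg0 : gn ≠ 0 := by
      intro h0'
      rw [hgn] at h0'
      have h1 := Int.gcd_eq_zero_iff.mp h0'
      have h2 : Int.gcd x₀ y₀ = 0 := by exact_mod_cast h1.1
      have h3 := Int.gcd_eq_zero_iff.mp h2
      exact h0 ⟨h3.1, h3.2, h1.2⟩
    obtain ⟨x₁, hx₁⟩ := hd1
    obtain ⟨y₁, hy₁⟩ := hd2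
    obtain ⟨z₁, hz₁⟩ := hd3
    have hg2 : 2 ≤ (gn:ℤ) := by
      have : 2 ≤ gn := by omega
      exact_mod_cast this
    have h1 : ¬(x₁ = 0 ∧ y₁ = 0 ∧ z₁ = 0) := by
      rintro ⟨rfl, rfl, rfl⟩
      exact h0 ⟨by simpa using hx₁, by simpa using hy₁, by simpa using hz₁⟩
    have hval : m = (gn:ℤ)^2 * F.val x₁ y₁ z₁ := by
      rw [hm, hx₁, hy₁, hz₁]; simp only [val]; ring
    have h2 := hmin x₁ y₁ z₁ h1
    have h3 := hF x₁ y₁ z₁ h1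
    have hg4 : (4:ℤ) ≤ (gn:ℤ)^2 := by nlinarith
    have h4 : 4 * F.val x₁ y₁ z₁ ≤ (gn:ℤ)^2 * F.val x₁ y₁ z₁ :=
      mul_le_mul_of_nonneg_right hg4 h3.le
    linarith
  obtain ⟨T, hTdet, e1, e2, e3⟩ := exists_unimodular_col x₀ y₀ z₀ hprim
  set G := T.act F with hG
  have hequiv : F.Equiv G := ⟨T, Or.inl hTdet, rfl⟩
  have hGa : G.a = m := by
    have : G.a = F.val T.p11 T.p21 T.p31 := rfl
    rw [this, e1, e2, e3]
  refine ⟨G, hequiv, by omega, ?_⟩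
  intro x y z hxyz
  obtain ⟨X, Y, Z, hXYZ, hval⟩ := hequiv.val_sub x y z hxyz
  rw [hval, hGa]
  exact hmin X Y Z hXYZ

/-- Hermite: a positive definite integral ternary form of determinant 3 attains 1,
in reduced position. -/
theorem exists_corner_one (F : QF3) (hF : F.PosDef) (hdet : F.det = 3) :
    ∃ G : QF3, F.Equiv G ∧ G.a = 1 := by
  obtain ⟨G, hFG, ha, hmin⟩ := exists_corner_min F hF
  refine ⟨G, hFG, ?_⟩
  have hGdet : G.det = 3 := by rw [← hFG.det_eq, hdet]
  have hGpd : G.PosDef := hFG.posDef hF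
  set a := G.a with hadef
  set C : QF2 := ⟨G.a*G.b - G.u^2, G.a*G.c - G.v^2, G.a*G.w - G.u*G.v⟩ with hC
  have key : ∀ x y z : ℤ, a * G.val x y z = (a*x + G.u*y + G.v*z)^2 + C.val y z := by
    intro x y z
    simp only [hC, QF2.val, val]; ring
  have hCdet : C.det = 3*a := by
    have e := hGdet
    simp only [det] at e
    simp only [hC, QF2.det]
    linear_combination G.a * e
  have hCpd : C.PosDef := by
    intro y z hyz
    obtain ⟨x₀, hs1, hs2⟩ := exists_shear a (G.u*y + G.v*z) ha
    have hnz : ¬(x₀ = 0 ∧ y = 0 ∧ z = 0) := by tauto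
    have h1 := hmin x₀ y z hnz
    have h2 := key x₀ y z
    nlinarith [sq_nonneg (2*(a*x₀ + G.u*y + G.v*z))]
  obtain ⟨y₀, z₀, hyz₀, hbound, hCmin⟩ := QF2.min_bound C hCpd
  set c₁ := C.val y₀ z₀ with hc₁
  have hc₁pos : 0 < c₁ := hCpd y₀ z₀ hyz₀
  obtain ⟨x₀, hs1, hs2⟩ := exists_shear a (G.u*y₀ + G.v*z₀) ha
  have hnz : ¬(x₀ = 0 ∧ y₀ = 0 ∧ z₀ = 0) := by tauto
  have h1 := hmin x₀ y₀ z₀ hnz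
  have h2 := key x₀ y₀ z₀
  -- 3a² ≤ 4c₁
  have h3 : 3*a^2 ≤ 4*c₁ := by nlinarith [sq_nonneg (2*(a*x₀ + G.u*y₀ + G.v*z₀))]
  -- c₁² ≤ 4a
  have h4 : 3*c₁^2 ≤ 12*a := by rw [hCdet] at hbound; linarith
  have h5 : 9*a^3 ≤ 64 := by nlinarith
  nlinarith

/-- embed binary equivalence into ternary, fixing the split first coordinate -/
theorem embed_binary {H : QF3} (hHa : H.a = 1) (hHu : H.u = 0) (hHv : H.v = 0)
    {B' : QF2} (h : (QF2.mk H.b H.c H.w).Equiv B') :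
    H.Equiv ⟨1, B'.a, B'.b, 0, 0, B'.u⟩ := by
  obtain ⟨T2, hT2, hact⟩ := h
  set T3 : M3 := ⟨1, 0, 0, 0, T2.p11, T2.p12, 0, T2.p21, T2.p22⟩ with hT3
  have hdet3 : T3.det = T2.det := by simp only [hT3, M3.det, M2.det]; ring
  refine ⟨T3, by rw [hdet3]; exact hT2, ?_⟩
  rw [← hact]
  refine QF3.mk.injEq .. ▸ ⟨?_, ?_, ?_, ?_, ?_, ?_⟩ <;>
    simp only [hT3, M3.act, M2.act, QF2.val, val, bil]
  · linear_combination hHa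
  · ring
  · ring
  · linear_combination T2.p11 * hHu + T2.p21 * hHv
  · linear_combination T2.p12 * hHu + T2.p22 * hHv
  · ring

theorem classify (F : QF3) (hF : F.PosDef) (hdet : F.det = 3) :
    F.Equiv ⟨1, 1, 3, 0, 0, 0⟩ ∨ F.Equiv ⟨1, 2, 2, 0, 0, 1⟩ := by
  obtain ⟨G, hFG, ha1⟩ := exists_corner_one F hF hdet
  set T : M3 := ⟨1, -G.u, -G.v, 0, 1, 0, 0, 0, 1⟩ with hT
  have hTdet : T.det = 1 := by simp [hT, M3.det]
  set H := T.act G with hH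
  have hFH : F.Equiv H := hFG.trans ⟨T, Or.inl hTdet, rfl⟩
  have hHpd : H.PosDef := hFH.posDef hF
  have hHdet : H.det = 3 := by rw [← hFH.det_eq, hdet]
  have hHa : H.a = 1 := by
    have e : H.a = G.val 1 0 0 := rfl
    rw [e]; simp only [val]; linear_combination ha1
  have hHu : H.u = 0 := by
    have e : H.u = G.bil 1 0 0 (-G.u) 1 0 := rfl
    rw [e]; simp only [bil]; linear_combination (-G.u) * ha1
  have hHv : H.v = 0 := by
    have e : H.v = G.bil 1 0 0 (-G.v) 0 1 := rfl
    rw [e]; simp only [bil]; linear_combination (-G.v) * ha1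
  set B : QF2 := ⟨H.b, H.c, H.w⟩ with hB
  have hBdet : B.det = 3 := by
    simp only [hB, QF2.det]
    have e : H.det = 3 := hHdet
    simp only [det] at e
    rw [hHa, hHu, hHv] at e
    linarith [e]
  have hBpd : B.PosDef := by
    intro y z hyz
    have e : B.val y z = H.val 0 y z := by simp only [hB, QF2.val, val]; ring
    rw [e]
    exact hHpd 0 y z (by tauto)
  rcases QF2.det_three_classes B hBpd hBdet with h|h
  · left
    exact hFH.trans (embed_binary hHa hHu hHv h)
  · right
    exact hFH.trans (embed_binary hHa hHu hHv h)

end QF3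

namespace QF3

theorem aux_no5 : ∀ a b c : ZMod 8, a^2 + 2*b^2 + 2*c^2 + 2*b*c ≠ 5 := by decide

theorem no_five_mod_eight (x y z : ℤ) :
    (QF3.mk 1 2 2 0 0 1).val x y z % 8 ≠ 5 := by
  intro h
  have hval : (QF3.mk 1 2 2 0 0 1).val x y z = x^2 + 2*y^2 + 2*z^2 + 2*y*z := by
    simp only [val]; ring
  rw [hval] at h
  have h2 : ((x^2 + 2*y^2 + 2*z^2 + 2*y*z : ℤ) : ZMod 8) = ((5:ℤ) : ZMod 8) := by
    rw [ZMod.intCast_eq_intCast_iff]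
    show _ % _ = _ % _
    omega
  push_cast at h2
  exact aux_no5 (x : ZMod 8) (y : ZMod 8) (z : ZMod 8) h2

theorem col_gcd_one (S : M3) (h : S.det = 1 ∨ S.det = -1) :
    Int.gcd (Int.gcd S.p11 S.p21 : ℤ) S.p31 = 1 := by
  set d := Int.gcd (Int.gcd S.p11 S.p21 : ℤ) S.p31 with hd
  have hd1 : (d:ℤ) ∣ S.p11 := dvd_trans (Int.gcd_dvd_left _ _) (Int.gcd_dvd_left _ _)
  have hd2 : (d:ℤ) ∣ S.p21 := dvd_trans (Int.gcd_dvd_left _ _) (Int.gcd_dvd_right _ _)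
  have hd3 : (d:ℤ) ∣ S.p31 := Int.gcd_dvd_right _ _
  have e : S.det = S.p11*(S.p22*S.p33-S.p23*S.p32) - S.p21*(S.p12*S.p33-S.p13*S.p32)
      + S.p31*(S.p12*S.p23-S.p13*S.p22) := by simp only [M3.det]; ring
  have hdvd : (d:ℤ) ∣ S.det := by
    rw [e]
    exact dvd_add (dvd_sub (hd1.mul_right _) (hd2.mul_right _)) (hd3.mul_right _)
  have h1 : (d:ℤ) ∣ 1 := by
    rcases h with h|h <;> rw [h] at hdvd
    · exact hdvd
    · exact dvd_neg.mp hdvd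
  have h2 : d ∣ 1 := by exact_mod_cast h1
  exact Nat.dvd_one.mp h2

theorem represent_extract (F : QF3) (hF : F.PosDef) (hdet : F.det = 3)
    (p : ℤ) (hp5 : p % 8 = 5) (hrep : ∃ x y z : ℤ, F.val x y z = p) :
    ∃ X Y Z : ℤ, X^2 + Y^2 + 3*Z^2 = F.a ∧ Int.gcd (Int.gcd X Y : ℤ) Z = 1 := by
  rcases classify F hF hdet with h|h
  · obtain ⟨S, hS, hact⟩ := h.symm
    refine ⟨S.p11, S.p21, S.p31, ?_, col_gcd_one S hS⟩
    have e : F.a = (QF3.mk 1 1 3 0 0 0).val S.p11 S.p21 S.p31 := by rw [← hact]; rfl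
    rw [e]; simp only [val]; ring
  · exfalso
    obtain ⟨x, y, z, hv⟩ := hrep
    obtain ⟨S, hS, hact⟩ := h.symm
    have e : F.val x y z = (QF3.mk 1 2 2 0 0 1).val (S.p11*x + S.p12*y + S.p13*z)
        (S.p21*x + S.p22*y + S.p23*z) (S.p31*x + S.p32*y + S.p33*z) := by
      rw [← hact]; exact (M3.act_val S _ x y z)
    rw [hv] at e
    exact no_five_mod_eight _ _ _ (by rw [← e]; exact hp5)

end QF3
section NumberTheory

open ZMod NumberTheorySymbols

/-- the quadratic character of -3 -/
def chi3 (k : ℕ) : ℤ := if k % 3 = 1 then 1 else -1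

theorem chi3_sq {k : ℕ} : chi3 k * chi3 k = 1 := by
  unfold chi3; split <;> norm_num

theorem jacobi_neg_three {k : ℕ} (hk : k % 2 = 1) (h3 : k % 3 ≠ 0) :
    J((-3 : ℤ) | k) = chi3 k := by
  have hodd : Odd k := Nat.odd_iff.mpr hk
  have h1 : J((-3:ℤ) | k) = J((-1:ℤ) | k) * J((3:ℤ) | k) := by
    rw [← jacobiSym.mul_left]; norm_num
  have h2 : J((-1:ℤ) | k) = χ₄ k := jacobiSym.at_neg_one hodd
  have h3' : J(((3:ℕ):ℤ) | k) = (-1) ^ (3 / 2 * (k / 2)) * J((k:ℤ) | 3) :=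
    jacobiSym.quadratic_reciprocity (by decide) hodd
  have h4 : J((3:ℤ) | k) = (-1) ^ (k / 2) * J((k:ℤ) | 3) := by
    rw [show ((3:ℤ)) = ((3:ℕ):ℤ) by norm_num, h3']
    norm_num
  have h5 : χ₄ k = (-1 : ℤ) ^ (k / 2) := χ₄_eq_neg_one_pow hk
  have h6 : J((k:ℤ) | 3) = J(((k % 3 : ℕ) : ℤ) | 3) := by
    apply jacobiSym.mod_left'
    push_cast
    omega
  have h7 : J(((k % 3 : ℕ) : ℤ) | 3) = chi3 k := by
    have : k % 3 = 1 ∨ k % 3 = 2 := by omega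
    rcases this with h|h
    · rw [h]; unfold chi3; rw [if_pos h]; exact jacobiSym.one_left 3
    · rw [h]; unfold chi3; rw [if_neg (by omega)]
      have h8 := jacobiSym.at_two (b := 3) (by decide)
      push_cast
      rw [h8, χ₈_nat_eq_if_mod_eight]
      norm_num
  rw [h1, h2, h4, h5, h6, h7, ← mul_assoc, ← pow_add]
  have : (-1 : ℤ) ^ (k / 2 + k / 2) = 1 := by
    rw [← two_mul]
    exact Even.neg_one_pow ⟨k/2, by ring⟩
  rw [this, one_mul]

/-- Key Jacobi symbol computation, case p ≡ -3 mod m -/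
theorem jacobi_claim_one (m : ℕ) (hm3 : m % 3 ≠ 0) (hm0 : 0 < m) :
    ∀ p : ℕ, p.Prime → p % 8 = 5 → ((m:ℤ) ∣ (p + 3)) → J((m:ℤ) | p) = chi3 m := by
  induction m using Nat.strong_induction_on with
  | _ m ih =>
    intro p hp hp8 hdvd
    have hp4 : p % 4 = 1 := by omega
    have hpodd : Odd p := by refine Nat.odd_iff.mpr (by omega)
    rcases Nat.even_or_odd m with hme|hmo
    · -- m even
      obtain ⟨m', rfl⟩ := hme
      have hm'0 : 0 < m' := by omega
      have hm'3 : m' % 3 ≠ 0 := by omega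
      have hdvd' : (m':ℤ) ∣ (p + 3) := dvd_trans ⟨2, by push_cast; ring⟩ hdvd
      have hih := ih m' (by omega) hm'3 hm'0 p hp hp8 hdvd'
      have hsplit : J(((m' + m' : ℕ):ℤ) | p) = J((2:ℤ) | p) * J((m':ℤ) | p) := by
        rw [show (((m' + m' : ℕ)):ℤ) = (2:ℤ) * (m':ℤ) by push_cast; ring]
        exact jacobiSym.mul_left 2 m' p
      have h2 : J((2:ℤ) | p) = -1 := by
        rw [jacobiSym.at_two hpodd, χ₈_nat_eq_if_mod_eight]
        have h1 : ¬ (p % 2 = 0) := by omega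
        have h2 : ¬ (p % 8 = 1 ∨ p % 8 = 7) := by omega
        simp [h1, h2]
      have hchi : chi3 (m' + m') = - chi3 m' := by
        unfold chi3
        have : m' % 3 = 1 ∨ m' % 3 = 2 := by omega
        rcases this with h|h
        · rw [if_neg (by omega), if_pos h]
        · rw [if_pos (by omega), if_neg (by omega)]; ring
      rw [hsplit, h2, hih, hchi]; ring
    · -- m odd
      have hrec : J(((m:ℕ):ℤ) | p) = J((p:ℤ) | m) :=
        jacobiSym.quadratic_reciprocity_one_mod_four' hmo hp4
      have hmod : J((p:ℤ) | m) = J((-3:ℤ) | m) := by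
        apply jacobiSym.mod_left'
        have hd : ((m:ℤ)) ∣ ((-3:ℤ) - p) := by
          obtain ⟨c, hc⟩ := hdvd
          exact ⟨-c, by linarith⟩
        exact Int.modEq_iff_dvd.mpr hd
      rw [hrec, hmod]
      exact jacobi_neg_three (Nat.odd_iff.mp hmo) hm3

end NumberTheory

section NT2
open ZMod NumberTheorySymbols

/-- Key Jacobi symbol computation, case 3p ≡ -1 mod m -/
theorem jacobi_claim_two (m : ℕ) (hm3 : m % 3 ≠ 0) (hm0 : 0 < m) :
    ∀ p : ℕ, p.Prime → p % 8 = 5 → ((m:ℤ) ∣ (3 * p + 1)) → J((m:ℤ) | p) = chi3 m := by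
  induction m using Nat.strong_induction_on with
  | _ m ih =>
    intro p hp hp8 hdvd
    have hp4 : p % 4 = 1 := by omega
    have hpodd : Odd p := by refine Nat.odd_iff.mpr (by omega)
    rcases Nat.even_or_odd m with hme|hmo
    · obtain ⟨m', rfl⟩ := hme
      have hm'0 : 0 < m' := by omega
      have hm'3 : m' % 3 ≠ 0 := by omega
      have hdvd' : (m':ℤ) ∣ (3 * p + 1) := dvd_trans ⟨2, by push_cast; ring⟩ hdvd
      have hih := ih m' (by omega) hm'3 hm'0 p hp hp8 hdvd'
      have hsplit : J(((m' + m' : ℕ):ℤ) | p) = J((2:ℤ) | p) * J((m':ℤ) | p) := by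
        rw [show (((m' + m' : ℕ)):ℤ) = (2:ℤ) * (m':ℤ) by push_cast; ring]
        exact jacobiSym.mul_left 2 m' p
      have h2 : J((2:ℤ) | p) = -1 := by
        rw [jacobiSym.at_two hpodd, χ₈_nat_eq_if_mod_eight]
        have h1 : ¬ (p % 2 = 0) := by omega
        have h2 : ¬ (p % 8 = 1 ∨ p % 8 = 7) := by omega
        simp [h1, h2]
      have hchi : chi3 (m' + m') = - chi3 m' := by
        unfold chi3
        have : m' % 3 = 1 ∨ m' % 3 = 2 := by omega
        rcases this with h|h
        · rw [if_neg (by omega), if_pos h]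
        · rw [if_pos (by omega), if_neg (by omega)]; ring
      rw [hsplit, h2, hih, hchi]; ring
    · -- m odd
      have hrec : J(((m:ℕ):ℤ) | p) = J((p:ℤ) | m) :=
        jacobiSym.quadratic_reciprocity_one_mod_four' hmo hp4
      have hgcd3 : Int.gcd (3:ℤ) m = 1 := by
        have h1 : Nat.Coprime 3 m :=
          (Nat.Prime.coprime_iff_not_dvd (by norm_num)).mpr (by omega)
        have h2 : Int.gcd ((3:ℕ):ℤ) ((m:ℕ):ℤ) = Nat.gcd 3 m := Int.gcd_natCast_natCast 3 m
        simpa [h1] using h2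
      have e1 : J((3:ℤ) | m) * J((p:ℤ) | m) = J((-1:ℤ) | m) := by
        rw [← jacobiSym.mul_left]
        apply jacobiSym.mod_left'
        have hd : ((m:ℤ)) ∣ ((-1:ℤ) - 3 * p) := by
          obtain ⟨c, hc⟩ := hdvd
          exact ⟨-c, by linarith⟩
        exact Int.modEq_iff_dvd.mpr hd
      have hsq : J((3:ℤ) | m) * J((3:ℤ) | m) = 1 := by
        have := jacobiSym.sq_one (a := (3:ℤ)) (b := m) hgcd3
        nlinarith [this]
      have e2 : J((p:ℤ) | m) = J((3:ℤ) | m) * J((-1:ℤ) | m) := by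
        have := congrArg (fun t => J((3:ℤ) | m) * t) e1
        rw [← mul_assoc, hsq, one_mul] at this
        exact this
      have e3 : J((3:ℤ) | m) * J((-1:ℤ) | m) = J((-3:ℤ) | m) := by
        rw [← jacobiSym.mul_left]; norm_num
      rw [hrec, e2, e3]
      exact jacobi_neg_three (Nat.odd_iff.mp hmo) hm3

end NT2

section Build

theorem build_form (N p D c x k : ℤ) (hN : 4 ≤ N) (hp : 0 < p) (hD : 1 ≤ D)
    (hpc : p * c = x^2 + D) (hND : N * D = k^2 * p + 3) (hA : 0 < N*c - k^2) :
    ∃ F : QF3, F.PosDef ∧ F.det = 3 ∧ F.a = N ∧ F.val 0 0 1 = p := by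
  refine ⟨⟨N, c, p, k, 0, -x⟩, ?_, ?_, rfl, ?_⟩
  · -- positive definiteness
    intro x₁ y₁ z₁ hnz
    set A : ℤ := N*c - k^2 with hAdef
    have hNpos : (0:ℤ) < N := by linarith
    have e : A*N*((QF3.mk N c p k 0 (-x)).val x₁ y₁ z₁)
        = A*(N*x₁ + k*y₁)^2 + (A*y₁ - N*x*z₁)^2 + 3*N*z₁^2 := by
      simp only [QF3.val, hAdef]
      linear_combination (N^2*z₁^2) * hpc + (N*z₁^2) * hND
    by_contra hle
    push_neg at hle
    have h1 : A*N*((QF3.mk N c p k 0 (-x)).val x₁ y₁ z₁) ≤ 0 := by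
      have := mul_pos hA hNpos
      nlinarith
    have h2 : A*(N*x₁ + k*y₁)^2 + (A*y₁ - N*x*z₁)^2 + 3*N*z₁^2 ≤ 0 := by
      rw [← e]; exact h1
    have hz2 : z₁^2 ≤ 0 := by
      nlinarith [sq_nonneg (N*x₁ + k*y₁), sq_nonneg (A*y₁ - N*x*z₁), mul_nonneg hA.le (sq_nonneg (N*x₁ + k*y₁))]
    have hz : z₁ = 0 := by
      have := sq_nonneg z₁
      exact pow_eq_zero_iff (by norm_num) |>.mp (le_antisymm hz2 this)
    subst hz
    have hy2 : (A*y₁)^2 ≤ 0 := by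
      nlinarith [mul_nonneg hA.le (sq_nonneg (N*x₁ + k*y₁))]
    have hy : y₁ = 0 := by
      have h3 : A*y₁ = 0 :=
        pow_eq_zero_iff (n := 2) (by norm_num) |>.mp (le_antisymm hy2 (sq_nonneg _))
      rcases mul_eq_zero.mp h3 with h|h
      · exfalso; omega
      · exact h
    subst hy
    have hx2 : (N*x₁)^2 ≤ 0 := by nlinarith [sq_nonneg (N*x₁)]
    have hx1 : x₁ = 0 := by
      have h3 : N*x₁ = 0 :=
        pow_eq_zero_iff (n := 2) (by norm_num) |>.mp (le_antisymm hx2 (sq_nonneg _))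
      rcases mul_eq_zero.mp h3 with h|h
      · exfalso; omega
      · exact h
    exact hnz ⟨hx1, rfl, rfl⟩
  · -- determinant
    simp only [QF3.det]
    linear_combination N * hpc + hND
  · simp only [QF3.val]; ring

end Build

section Case1
open ZMod NumberTheorySymbols

theorem rep_case1 (m : ℕ) (hm0 : 0 < m) (hm3 : m % 3 ≠ 0) :
    ∃ X Y Z : ℤ, X^2 + Y^2 + 3*Z^2 = 4*(m:ℤ) ∧ Int.gcd (Int.gcd X Y : ℤ) Z = 1 := by
  classical
  set c₃ : ℕ := if m % 3 = 1 then 1 else 2 with hc₃def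
  have hc₃ne : c₃ ≠ 0 ∧ c₃ < 3 := by rw [hc₃def]; split <;> omega
  have hco : Nat.Coprime (8*m) 3 := by
    have h1 : ¬ (3 ∣ 8*m) := by omega
    exact Nat.coprime_comm.mp ((Nat.Prime.coprime_iff_not_dvd (by norm_num)).mpr h1)
  obtain ⟨k, hk1, hk2⟩ := Nat.chineseRemainder hco (8*m - 3) c₃
  have hk3 : k % 3 = c₃ % 3 := hk2
  have hk4 : k % (8*m) = (8*m - 3) % (8*m) := hk1
  have hcok3 : Nat.Coprime k 3 := by
    have h1 : ¬ (3 ∣ k) := by omega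
    exact Nat.coprime_comm.mp ((Nat.Prime.coprime_iff_not_dvd (by norm_num)).mpr h1)
  have hcok8 : Nat.Coprime k (8*m) := by
    rw [Nat.coprime_comm]
    by_contra hcon
    obtain ⟨q, hq, hq8, hqk⟩ := Nat.Prime.not_coprime_iff_dvd.mp hcon
    have hd1 : ((8*m:ℕ):ℤ) ∣ ((8*m - 3 : ℕ):ℤ) - (k:ℤ) := Nat.ModEq.dvd hk1
    have hq1 : (q:ℤ) ∣ ((8*m - 3 : ℕ):ℤ) - (k:ℤ) :=
      dvd_trans (Int.natCast_dvd_natCast.mpr hq8) hd1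
    have hq2 : (q:ℤ) ∣ ((8*m - 3 : ℕ):ℤ) := by
      have h := dvd_add hq1 (Int.natCast_dvd_natCast.mpr hqk)
      simpa using h
    have hq3 : (q:ℤ) ∣ 3 := by
      have h8 : ((8*m:ℕ):ℤ) - ((8*m - 3:ℕ):ℤ) = 3 := by
        push_cast [Nat.cast_sub (by omega : 3 ≤ 8*m)]
        ring
      rw [← h8]
      exact dvd_sub (Int.natCast_dvd_natCast.mpr hq8) hq2
    have hq4 : q = 3 := by
      have h1 : (q:ℕ) ∣ 3 := by exact_mod_cast hq3
      exact (Nat.prime_dvd_prime_iff_eq hq (by norm_num)).mp h1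
    rw [hq4] at hq8
    omega
  have hcoQ : Nat.Coprime k (24*m) := by
    have h24 : 24*m = (8*m) * 3 := by ring
    rw [h24]
    exact Nat.Coprime.mul_right hcok8 hcok3
  haveI : NeZero (24*m) := ⟨by omega⟩
  have hunit : IsUnit ((k : ZMod (24*m))) := (ZMod.isUnit_iff_coprime k (24*m)).mpr hcoQ
  obtain ⟨p, hpgt, hpp, hpmod⟩ := Nat.forall_exists_prime_gt_and_eq_mod hunit (24*m + 100)
  haveI : Fact p.Prime := ⟨hpp⟩
  have hMod : p ≡ k [MOD 24*m] := (ZMod.natCast_eq_natCast_iff p k (24*m)).mp hpmod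
  have hMod8 : p ≡ 8*m - 3 [MOD 8*m] :=
    ((hMod.of_dvd (by exact ⟨3, by ring⟩)).trans hk1)
  have hMod3 : p % 3 = c₃ := by
    have h1 : p ≡ c₃ [MOD 3] := (hMod.of_dvd (by exact ⟨8*m, by ring⟩)).trans hk2
    have h2 : p % 3 = c₃ % 3 := h1
    omega
  have hdvd8 : ((8*m:ℕ):ℤ) ∣ (p:ℤ) + 3 := by
    have hd1 : ((8*m:ℕ):ℤ) ∣ ((8*m - 3 : ℕ):ℤ) - (p:ℤ) := Nat.ModEq.dvd hMod8
    have h8 : ((8*m - 3:ℕ):ℤ) = 8*(m:ℤ) - 3 := by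
      push_cast [Nat.cast_sub (by omega : 3 ≤ 8*m)]
      ring
    rw [h8] at hd1
    have : (p:ℤ) + 3 = (8*(m:ℤ)) - ((8*(m:ℤ) - 3) - (p:ℤ)) := by ring
    rw [this]
    exact dvd_sub (by push_cast; exact ⟨1, by ring⟩) hd1
  have hp8 : p % 8 = 5 := by
    have h1 : (8:ℤ) ∣ (p:ℤ) + 3 := dvd_trans ⟨(m:ℤ), by push_cast; ring⟩ hdvd8
    have h2 : (8:ℕ) ∣ (p + 3) := by exact_mod_cast h1
    omega
  -- D
  obtain ⟨D, hD⟩ : ((4*m:ℕ):ℤ) ∣ (p:ℤ) + 3 := dvd_trans ⟨2, by push_cast; ring⟩ hdvd8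
  have hmZ : (0:ℤ) < (m:ℤ) := by exact_mod_cast hm0
  have hD1 : 1 ≤ D := by nlinarith [hD]
  -- Jacobi symbol computation
  have hppos : (0:ℤ) < p := by exact_mod_cast hpp.pos
  have hJ : J((-D) | p) = 1 := by
    have e0 : (-D) * (4*(m:ℤ)) = -((p:ℤ)+3) := by push_cast at hD ⊢; linarith
    have h1 : J((-D) * (4*(m:ℤ)) | p) = J((-3 : ℤ) | p) := by
      apply jacobiSym.mod_left'
      rw [e0]
      have : ((p:ℕ):ℤ) ∣ (-3 : ℤ) - (-((p:ℤ)+3)) := ⟨1, by ring⟩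
      exact Int.modEq_iff_dvd.mpr this
    have h2 : J((-D) * (4*(m:ℤ)) | p) = J((-D) | p) * J((4*(m:ℤ)) | p) :=
      jacobiSym.mul_left _ _ p
    have h3 : J((4*(m:ℤ)) | p) = J((4:ℤ) | p) * J((m:ℤ) | p) := jacobiSym.mul_left _ _ p
    have h4 : J((4:ℤ) | p) = 1 := by
      have hg : Int.gcd (2:ℤ) p = 1 := by
        have h2 : Nat.Coprime 2 p :=
          (Nat.Prime.coprime_iff_not_dvd (by norm_num)).mpr (by omega)
        have h3 := Int.gcd_natCast_natCast 2 p
        rw [show ((2:ℕ):ℤ) = (2:ℤ) by norm_num] at h3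
        rw [h3]; exact h2
      have h5 := jacobiSym.sq_one' (a := (2:ℤ)) (b := p) hg
      norm_num at h5
      exact h5
    have h5 : J((m:ℤ) | p) = chi3 m :=
      jacobi_claim_one m hm3 hm0 p hpp hp8 (dvd_trans ⟨8, by push_cast; ring⟩ hdvd8)
    have h6 : J((-3:ℤ) | p) = chi3 m := by
      rw [jacobi_neg_three (by omega) (by omega)]
      unfold chi3
      rw [hMod3, hc₃def]
      split
      · rw [if_pos (by omega)]
      · rw [if_neg (by omega)]
    have h7 : J((-D) | p) * chi3 m = chi3 m := by
      have e := h1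
      rw [h2, h3, h4, h5, h6] at e
      ring_nf at e ⊢
      linarith [e]
    have h8 : J((-D) | p) * (chi3 m * chi3 m) = chi3 m * chi3 m := by
      rw [← mul_assoc, h7]
    rw [chi3_sq, mul_one] at h8
    exact h8
  -- extract square root
  have hsq : IsSquare ((-D : ℤ) : ZMod p) := ZMod.isSquare_of_jacobiSym_eq_one hJ
  obtain ⟨ξ, hξ⟩ := hsq
  set x : ℤ := (ξ.val : ℤ) with hxdef
  have hx : ((p:ℕ):ℤ) ∣ x^2 + D := by
    rw [← ZMod.intCast_zmod_eq_zero_iff_dvd]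
    have hval : ((ξ.val : ℕ) : ZMod p) = ξ := ZMod.natCast_rightInverse ξ
    have hcast : ((-D : ℤ) : ZMod p) = ξ * ξ := hξ
    push_cast at hcast ⊢
    rw [hxdef]
    push_cast
    rw [hval]
    linear_combination - hcast
  obtain ⟨c, hc⟩ := hx
  -- build the form
  have hND : (4*(m:ℤ)) * D = 1^2*(p:ℤ) + 3 := by push_cast at hD; linarith
  have hpc : (p:ℤ) * c = x^2 + D := hc.symm
  have hcge : 1 ≤ c := by nlinarith [sq_nonneg x]
  have hA : 0 < (4*(m:ℤ))*c - 1^2 := by nlinarith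
  obtain ⟨F, hFpd, hFdet, hFa, hFval⟩ :=
    build_form (4*(m:ℤ)) p D c x 1 (by omega) hppos hD1 hpc hND hA
  have hp5 : (p:ℤ) % 8 = 5 := by omega
  obtain ⟨X, Y, Z, hXYZ, hprim⟩ :=
    QF3.represent_extract F hFpd hFdet p hp5 ⟨0, 0, 1, hFval⟩
  exact ⟨X, Y, Z, by rw [hXYZ, hFa], hprim⟩

end Case1

section Case2
open ZMod NumberTheorySymbols

theorem rep_case2 (mt : ℕ) (hm0 : 0 < mt) (hm1 : mt % 3 = 1) :
    ∃ X Y Z : ℤ, X^2 + Y^2 + 3*Z^2 = 12*(mt:ℤ) ∧ Int.gcd (Int.gcd X Y : ℤ) Z = 1 := by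
  classical
  -- T = (16 mt - 1)/3, the solution of 3T ≡ -1 mod 8 mt
  have h3d : 3 ∣ 16*mt - 1 := by omega
  set T : ℕ := (16*mt - 1)/3 with hTdef
  have h3T : 3*T = 16*mt - 1 := by omega
  have hcoT : Nat.Coprime T (8*mt) := by
    by_contra hcon
    obtain ⟨q, hq, hqT, hq8⟩ := Nat.Prime.not_coprime_iff_dvd.mp hcon
    have h1 : q ∣ 16*mt - 1 := by
      rw [← h3T]; exact Dvd.dvd.mul_left hqT 3
    have h2 : q ∣ 16*mt := by
      have : q ∣ 2*(8*mt) := Dvd.dvd.mul_left hq8 2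
      rwa [show 2*(8*mt) = 16*mt by ring] at this
    have h3 : q ∣ 1 := by
      have := Nat.dvd_sub h2 h1
      rwa [show 16*mt - (16*mt - 1) = 1 by omega] at this
    exact hq.one_lt.ne' (Nat.dvd_one.mp h3)
  haveI : NeZero (8*mt) := ⟨by omega⟩
  have hunit : IsUnit ((T : ZMod (8*mt))) := (ZMod.isUnit_iff_coprime T (8*mt)).mpr hcoT
  obtain ⟨p, hpgt, hpp, hpmod⟩ := Nat.forall_exists_prime_gt_and_eq_mod hunit (24*mt + 100)
  haveI : Fact p.Prime := ⟨hpp⟩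
  have hMod : p ≡ T [MOD 8*mt] := (ZMod.natCast_eq_natCast_iff p T (8*mt)).mp hpmod
  have hdvd : 8*mt ∣ 3*p + 1 := by
    have h1 : 3*p + 1 ≡ 3*T + 1 [MOD 8*mt] := (hMod.mul_left 3).add_right 1
    have h2 : 3*T + 1 = 16*mt := by omega
    rw [h2] at h1
    have h3 : (3*p + 1) % (8*mt) = (16*mt) % (8*mt) := h1
    have h4 : (16*mt) % (8*mt) = 0 := by
      have h6 : 16*mt = (8*mt)*2 := by ring
      rw [h6]
      exact Nat.mul_mod_right (8*mt) 2
    have h5 : (3*p+1) % (8*mt) = 0 := by omega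
    exact Nat.dvd_of_mod_eq_zero h5
  have hp8 : p % 8 = 5 := by
    have h1 : 8 ∣ 3*p+1 := dvd_trans ⟨mt, by ring⟩ hdvd
    omega
  -- D
  obtain ⟨D, hD⟩ : ((4*mt:ℕ):ℤ) ∣ 3*(p:ℤ) + 1 := by
    have h1 : ((8*mt:ℕ):ℤ) ∣ ((3*p+1 : ℕ):ℤ) := Int.natCast_dvd_natCast.mpr hdvd
    have h2 : ((4*mt:ℕ):ℤ) ∣ ((8*mt:ℕ):ℤ) := ⟨2, by push_cast; ring⟩
    have h3 := dvd_trans h2 h1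
    have h4 : ((3*p+1 : ℕ):ℤ) = 3*(p:ℤ)+1 := by push_cast; ring
    rwa [h4] at h3
  have hmZ : (0:ℤ) < (mt:ℤ) := by exact_mod_cast hm0
  have hppos : (0:ℤ) < p := by exact_mod_cast hpp.pos
  have hD1 : 1 ≤ D := by nlinarith [hD]
  -- Jacobi symbol
  have hJ : J((-D) | p) = 1 := by
    have e0 : (-D) * (4*(mt:ℤ)) = -(3*(p:ℤ)+1) := by push_cast at hD ⊢; linarith
    have h1 : J((-D) * (4*(mt:ℤ)) | p) = J((-1 : ℤ) | p) := by
      apply jacobiSym.mod_left'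
      rw [e0]
      have hdd : ((p:ℕ):ℤ) ∣ (-1 : ℤ) - (-(3*(p:ℤ)+1)) := ⟨3, by ring⟩
      exact Int.modEq_iff_dvd.mpr hdd
    have h2 : J((-D) * (4*(mt:ℤ)) | p) = J((-D) | p) * J((4*(mt:ℤ)) | p) :=
      jacobiSym.mul_left _ _ p
    have h3 : J((4*(mt:ℤ)) | p) = J((4:ℤ) | p) * J((mt:ℤ) | p) := jacobiSym.mul_left _ _ p
    have h4 : J((4:ℤ) | p) = 1 := by
      have hg : Int.gcd (2:ℤ) p = 1 := by
        have h2' : Nat.Coprime 2 p :=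
          (Nat.Prime.coprime_iff_not_dvd (by norm_num)).mpr (by omega)
        have h3' := Int.gcd_natCast_natCast 2 p
        rw [show ((2:ℕ):ℤ) = (2:ℤ) by norm_num] at h3'
        rw [h3']; exact h2'
      have h5' := jacobiSym.sq_one' (a := (2:ℤ)) (b := p) hg
      norm_num at h5'
      exact h5'
    have h5 : J((mt:ℤ) | p) = 1 := by
      have hdvd' : (mt:ℤ) ∣ (3*(p:ℤ) + 1) := by
        have hmid : (mt:ℤ) ∣ ((4*mt:ℕ):ℤ) := ⟨4, by push_cast; ring⟩
        exact dvd_trans hmid ⟨D, hD⟩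
      rw [jacobi_claim_two mt (by omega) hm0 p hpp hp8 hdvd']
      unfold chi3
      rw [if_pos hm1]
    have h6 : J((-1:ℤ) | p) = 1 := by
      rw [jacobiSym.at_neg_one (by refine Nat.odd_iff.mpr (by omega))]
      exact χ₄_nat_one_mod_four (by omega)
    have e := h1
    rw [h2, h3, h4, h5, h6] at e
    ring_nf at e ⊢
    linarith [e]
  -- square root
  have hsq : IsSquare ((-D : ℤ) : ZMod p) := ZMod.isSquare_of_jacobiSym_eq_one hJ
  obtain ⟨ξ, hξ⟩ := hsq
  set x : ℤ := (ξ.val : ℤ) with hxdef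
  have hx : ((p:ℕ):ℤ) ∣ x^2 + D := by
    rw [← ZMod.intCast_zmod_eq_zero_iff_dvd]
    have hval : ((ξ.val : ℕ) : ZMod p) = ξ := ZMod.natCast_rightInverse ξ
    have hcast : ((-D : ℤ) : ZMod p) = ξ * ξ := hξ
    push_cast at hcast ⊢
    rw [hxdef]
    push_cast
    rw [hval]
    linear_combination - hcast
  obtain ⟨c, hc⟩ := hx
  have hND : (12*(mt:ℤ)) * D = 3^2*(p:ℤ) + 3 := by push_cast at hD; linarith
  have hpc : (p:ℤ) * c = x^2 + D := hc.symm
  have hcge : 1 ≤ c := by nlinarith [sq_nonneg x]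
  have hA : 0 < (12*(mt:ℤ))*c - 3^2 := by nlinarith
  obtain ⟨F, hFpd, hFdet, hFa, hFval⟩ :=
    build_form (12*(mt:ℤ)) p D c x 3 (by omega) hppos hD1 hpc hND hA
  have hp5 : (p:ℤ) % 8 = 5 := by omega
  obtain ⟨X, Y, Z, hXYZ, hprim⟩ :=
    QF3.represent_extract F hFpd hFdet p hp5 ⟨0, 0, 1, hFval⟩
  exact ⟨X, Y, Z, by rw [hXYZ, hFa], hprim⟩

end Case2

section Assemble

/-- squares mod 4 -/
theorem int_sq_mod_four (X : ℤ) : (X % 2 = 0 ∧ X^2 % 4 = 0) ∨ (X % 2 ≠ 0 ∧ X^2 % 4 = 1) := by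
  have h := Int.mul_ediv_add_emod X 2
  have h2 : X % 2 = 0 ∨ X % 2 = 1 := by omega
  rcases h2 with h2|h2
  · left
    refine ⟨h2, ?_⟩
    have hX : X = 2*(X/2) := by omega
    have e : X^2 = 4*(X/2)^2 := by linear_combination (X + 2*(X/2)) * hX
    rw [e]
    exact Int.mul_emod_right 4 _
  · right
    refine ⟨by omega, ?_⟩
    have hX : X = 2*(X/2) + 1 := by omega
    have e : X^2 = 1 + 4*((X/2)^2 + X/2) := by linear_combination (X + 2*(X/2) + 1) * hX
    rw [e, Int.add_mul_emod_self_left]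
    norm_num

theorem sq_mod_three (c : ℤ) : c^2 % 3 = 0 ∨ c^2 % 3 = 1 := by
  have h := Int.mul_ediv_add_emod c 3
  have h2 : c % 3 = 0 ∨ c % 3 = 1 ∨ c % 3 = 2 := by omega
  rcases h2 with h2|h2|h2
  · left
    have hc : c = 3*(c/3) := by omega
    have e : c^2 = 3*(3*(c/3)^2) := by linear_combination (c + 3*(c/3)) * hc
    rw [e]; exact Int.mul_emod_right 3 _
  · right
    have hc : c = 3*(c/3) + 1 := by omega
    have e : c^2 = 1 + 3*(3*(c/3)^2 + 2*(c/3)) := by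
      linear_combination (c + 3*(c/3) + 1) * hc
    rw [e, Int.add_mul_emod_self_left]; norm_num
  · right
    have hc : c = 3*(c/3) + 2 := by omega
    have e : c^2 = 1 + 3*(3*(c/3)^2 + 4*(c/3) + 1) := by
      linear_combination (c + 3*(c/3) + 2) * hc
    rw [e, Int.add_mul_emod_self_left]; norm_num

theorem zmod3_sq_add_sq : ∀ a b : ZMod 3, a^2 + b^2 = 0 → a = 0 ∧ b = 0 := by decide

theorem three_dvd_of_dvd_sq_add_sq (u v : ℤ) (h : (3:ℤ) ∣ u^2 + v^2) : (3:ℤ) ∣ u ∧ (3:ℤ) ∣ v := by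
  have h1 : ((u^2 + v^2 : ℤ) : ZMod 3) = 0 := by
    rw [ZMod.intCast_zmod_eq_zero_iff_dvd]
    exact_mod_cast h
  push_cast at h1
  obtain ⟨ha, hb⟩ := zmod3_sq_add_sq _ _ h1
  constructor
  · exact_mod_cast (ZMod.intCast_zmod_eq_zero_iff_dvd u 3).mp ha
  · exact_mod_cast (ZMod.intCast_zmod_eq_zero_iff_dvd v 3).mp hb

/-- a primitive representation of 4M by x²+y²+3z² has odd z -/
theorem prim_rep_odd (M : ℤ) (X Y Z : ℤ) (h : X^2+Y^2+3*Z^2 = 4*M)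
    (hprim : Int.gcd (Int.gcd X Y : ℤ) Z = 1) : Odd Z := by
  rcases Int.even_or_odd Z with hZ|hZ
  swap
  · exact hZ
  exfalso
  obtain ⟨z1, hz1⟩ := hZ
  have h3Z : (3*Z^2) % 4 = 0 := by
    have e : 3*Z^2 = 4*(3*z1^2) := by rw [hz1]; ring
    rw [e]; exact Int.mul_emod_right 4 _
  have hXY : (X^2 + Y^2) % 4 = 0 := by
    have e : X^2 + Y^2 = 4*M - 4*(3*z1^2) := by rw [hz1] at h; linarith [h]
    have e2 : X^2 + Y^2 = 4*(M - 3*z1^2) := by linarith [e]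
    rw [e2]; exact Int.mul_emod_right 4 _
  have hX := int_sq_mod_four X
  have hY := int_sq_mod_four Y
  have hadd := Int.add_emod (X^2) (Y^2) 4
  have hXe : X % 2 = 0 ∧ Y % 2 = 0 := by
    rcases hX with ⟨h1, h2⟩|⟨h1, h2⟩ <;> rcases hY with ⟨h3, h4⟩|⟨h3, h4⟩ <;>
      constructor <;> omega
  -- now 2 divides everything
  have h2X : (2:ℤ) ∣ X := by omega
  have h2Y : (2:ℤ) ∣ Y := by omega
  have h2Z : (2:ℤ) ∣ Z := by omega
  have hg1 : (2:ℤ) ∣ (Int.gcd X Y : ℤ) := Int.dvd_coe_gcd h2X h2Y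
  have hg2 : (2:ℤ) ∣ (Int.gcd (Int.gcd X Y : ℤ) Z : ℤ) := Int.dvd_coe_gcd hg1 h2Z
  rw [hprim] at hg2
  norm_num at hg2

/-- exclusion predicate -/
def Excl (m : ℕ) : Prop := ∃ r t : ℕ, m = 3^(2*r+1) * (3*t+2)

/-- the hard direction: every non-excluded m has a representation 4m = u²+v²+3c², c odd -/
theorem rep_main : ∀ m : ℕ, 0 < m → ¬ Excl m →
    ∃ u v c : ℤ, u^2+v^2+3*c^2 = 4*(m:ℤ) ∧ Odd c := by
  intro m
  induction m using Nat.strong_induction_on with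
  | _ m ih =>
    intro hm0 hex
    by_cases h3 : m % 3 = 0
    · -- m divisible by 3
      set m1 := m / 3 with hm1
      have hm1e : m = 3*m1 := by omega
      by_cases h9 : m1 % 3 = 0
      · -- 9 | m : strip
        set m2 := m1 / 3 with hm2
        have hm2e : m = 9*m2 := by omega
        have hm20 : 0 < m2 := by omega
        have hex2 : ¬ Excl m2 := by
          rintro ⟨r, t, hrt⟩
          exact hex ⟨r+1, t, by rw [hm2e, hrt]; ring⟩
        obtain ⟨u, v, c, hval, hodd⟩ := ih m2 (by omega) hm20 hex2
        refine ⟨3*u, 3*v, 3*c, ?_, ?_⟩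
        · rw [hm2e]; push_cast; push_cast at hval; linarith
        · obtain ⟨k, rfl⟩ := hodd
          exact ⟨3*k+1, by ring⟩
      · -- 3 ‖ m
        have hm13 : m1 % 3 = 1 := by
          have hcase : m1 % 3 = 1 ∨ m1 % 3 = 2 := by omega
          rcases hcase with h|h
          · exact h
          · exfalso
            refine hex ⟨0, m1/3, ?_⟩
            have h31 : (3:ℕ)^(2*0+1) = 3 := by norm_num
            rw [h31]
            omega
        obtain ⟨X, Y, Z, hval, hprim⟩ := rep_case2 m1 (by omega) hm13
        have hZodd : Odd Z := by
          apply prim_rep_odd ((3*m1 : ℕ):ℤ) X Y Z ?_ hprim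
          · push_cast
            push_cast at hval
            linarith
        exact ⟨X, Y, Z, by rw [hval]; push_cast [hm1e]; ring, hZodd⟩
    · -- 3 ∤ m
      obtain ⟨X, Y, Z, hval, hprim⟩ := rep_case1 m hm0 h3
      have hZodd : Odd Z := prim_rep_odd (m:ℤ) X Y Z (by linarith [hval]) hprim
      exact ⟨X, Y, Z, hval, hZodd⟩

end Assemble

section Final

theorem three_dvd_of_sq (c : ℤ) (h : (3:ℤ) ∣ c^2) : (3:ℤ) ∣ c :=
  Int.Prime.dvd_pow' (by norm_num) h

theorem no_rep (r t : ℕ) : ∀ u v c : ℤ, Odd c →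
    u^2 + v^2 + 3*c^2 ≠ 4*(3:ℤ)^(2*r+1) * (3*(t:ℤ)+2) := by
  induction r with
  | zero =>
    intro u v c hodd heq
    have hpow : (3:ℤ)^(2*0+1) = 3 := by norm_num
    rw [hpow] at heq
    have h3 : (3:ℤ) ∣ u^2 + v^2 := ⟨12*(t:ℤ) + 8 - c^2, by linarith⟩
    obtain ⟨hu, hv⟩ := three_dvd_of_dvd_sq_add_sq u v h3
    obtain ⟨u1, rfl⟩ := hu
    obtain ⟨v1, rfl⟩ := hv
    have heq2 : 3*u1^2 + 3*v1^2 + c^2 = 12*(t:ℤ) + 8 := by linarith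
    have h1 := sq_mod_three c
    have hmod : c^2 % 3 = 2 := by
      have e : c^2 = 2 + 3*(4*(t:ℤ) + 2 - u1^2 - v1^2) := by linarith
      rw [e, Int.add_mul_emod_self_left]
      norm_num
    omega
  | succ r ih =>
    intro u v c hodd heq
    have hpow : (3:ℤ)^(2*(r+1)+1) = 9 * (3:ℤ)^(2*r+1) := by
      rw [show 2*(r+1)+1 = (2*r+1)+2 by ring, pow_add]
      ring
    rw [hpow] at heq
    set K : ℤ := 4*(3:ℤ)^(2*r+1) * (3*(t:ℤ)+2) with hK
    have heq' : u^2 + v^2 + 3*c^2 = 9*K := by rw [hK]; linarith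
    have hKpos : 0 < K := by
      rw [hK]
      positivity
    have h3 : (3:ℤ) ∣ u^2 + v^2 := ⟨3*K - c^2, by linarith⟩
    obtain ⟨hu, hv⟩ := three_dvd_of_dvd_sq_add_sq u v h3
    obtain ⟨u1, rfl⟩ := hu
    obtain ⟨v1, rfl⟩ := hv
    have heq2 : 3*u1^2 + 3*v1^2 + c^2 = 3*K := by linarith
    have h3c : (3:ℤ) ∣ c := three_dvd_of_sq c ⟨K - u1^2 - v1^2, by linarith⟩
    obtain ⟨c1, rfl⟩ := h3c
    have hc1odd : Odd c1 := by
      rcases Int.even_or_odd c1 with he|ho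
      · exfalso
        obtain ⟨k, hk⟩ := he
        obtain ⟨j, hj⟩ := hodd
        omega
      · exact ho
    have heq3 : u1^2 + v1^2 + 3*c1^2 = K := by linarith
    exact ih u1 v1 c1 hc1odd heq3

/-- the main characterization at the level of m -/
theorem main_char (m : ℕ) (hm : 0 < m) :
    (∃ u v c : ℤ, u^2+v^2+3*c^2 = 4*(m:ℤ) ∧ Odd c) ↔ ¬ Excl m := by
  constructor
  · rintro ⟨u, v, c, heq, hodd⟩ ⟨r, t, hrt⟩
    refine no_rep r t u v c hodd ?_
    rw [heq, hrt]
    push_cast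
    ring
  · intro hex
    exact rep_main m hm hex

end Final

section TheEnd

theorem lhs_iff (n : ℤ) :
    (∃ x y z : ℤ, x * (x - 1) + y * (y - 1) + 6 * (z * (z - 1)) = 2 * n) ↔
      (∃ u v c : ℤ, u^2 + v^2 + 3*c^2 = 4*(n+1) ∧ Odd c) := by
  constructor
  · rintro ⟨x, y, z, h⟩
    exact ⟨x + y - 1, x - y, 2*z - 1, by linear_combination 2*h, ⟨z - 1, by ring⟩⟩
  · rintro ⟨u, v, c, heq, hodd⟩
    obtain ⟨k, hk⟩ := hodd
    have hmod : (u^2 + v^2) % 4 = 1 := by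
      have e : u^2 + v^2 = 1 + 4*(n - 3*k^2 - 3*k) := by
        rw [hk] at heq
        linarith
      rw [e, Int.add_mul_emod_self_left]
      norm_num
    have hu4 := int_sq_mod_four u
    have hv4 := int_sq_mod_four v
    have hadd := Int.add_emod (u^2) (v^2) 4
    have hpar : (u + v) % 2 = 1 := by
      rcases hu4 with ⟨h1, h2⟩|⟨h1, h2⟩ <;> rcases hv4 with ⟨h3, h4⟩|⟨h3, h4⟩ <;> omega
    have hodduv : Odd (u + v) := Int.odd_iff.mpr hpar
    have hodduv' : Odd (u - v) := by
      rcases Int.even_or_odd (u - v) with he|ho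
      · exfalso
        obtain ⟨a, ha⟩ := he
        obtain ⟨b, hb⟩ := hodduv
        omega
      · exact ho
    obtain ⟨s, hs⟩ := hodduv
    obtain ⟨d, hd⟩ := hodduv'
    have hu : u = s + d + 1 := by omega
    have hv : v = s - d := by omega
    refine ⟨s + 1, d + 1, k + 1, ?_⟩
    rw [hu, hv, hk] at heq
    have h2 : 2*((s+1) * ((s+1)-1) + (d+1) * ((d+1)-1) + 6*((k+1) * ((k+1)-1))) = 2*(2*n) := by
      linear_combination heq
    linarith [h2]

theorem excl_iff (n : ℤ) (M : ℕ) (hM : (M:ℤ) = n + 1) (hM0 : 0 < M) :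
    (∃ r : ℕ, 0 < r ∧ n ≡ 2 * 3 ^ (2 * r - 1) - 1 [ZMOD 3 ^ (2 * r)]) ↔ Excl M := by
  constructor
  · rintro ⟨r, hr, hcong⟩
    obtain ⟨s, rfl⟩ : ∃ s, r = s + 1 := ⟨r - 1, by omega⟩
    have e1 : 2*(s+1) - 1 = 2*s + 1 := by omega
    have e2 : 2*(s+1) = (2*s+1) + 1 := by omega
    rw [e1, e2] at hcong
    have hdvd : (3:ℤ)^(2*s+1+1) ∣ (2 * 3 ^ (2*s+1) - 1) - n := Int.ModEq.dvd hcong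
    obtain ⟨k, hkk⟩ := hdvd
    -- n + 1 = 3^(2s+1) * (2 - 3k)
    have hn1 : (M:ℤ) = 3^(2*s+1) * (2 - 3*k) := by
      rw [hM]
      have : (3:ℤ)^(2*s+1+1) = 3^(2*s+1) * 3 := pow_succ 3 (2*s+1)
      rw [this] at hkk
      linarith [hkk]
    have hpow : (0:ℤ) < 3^(2*s+1) := by positivity
    have hkle : k ≤ 0 := by nlinarith [hn1, hpow]
    refine ⟨s, (-k).toNat, ?_⟩
    have ht : ((-k).toNat : ℤ) = -k := Int.toNat_of_nonneg (by omega)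
    have : (M:ℤ) = ((3:ℕ):ℤ)^(2*s+1) * (3*((-k).toNat : ℤ)+2) := by
      rw [ht]
      push_cast
      rw [hn1]
      ring
    exact_mod_cast this
  · rintro ⟨r, t, hrt⟩
    refine ⟨r+1, by omega, ?_⟩
    have e1 : 2*(r+1) - 1 = 2*r + 1 := by omega
    have e2 : 2*(r+1) = (2*r+1) + 1 := by omega
    rw [e1, e2]
    rw [Int.modEq_iff_dvd]
    refine ⟨-(t:ℤ), ?_⟩
    have hMZ : (M:ℤ) = (3:ℤ)^(2*r+1) * (3*(t:ℤ)+2) := by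
      rw [hrt]; push_cast; ring
    have hnM : n = (M:ℤ) - 1 := by omega
    rw [hnM, hMZ, pow_succ]
    ring

end TheEnd

theorem stmt_19 (n : ℤ) (hn : 0 < n) :
    (∃ x y z : ℤ, x * (x - 1) + y * (y - 1) + 6 * (z * (z - 1)) = 2 * n) ↔
      ¬ ∃ r : ℕ, 0 < r ∧ n ≡ 2 * 3 ^ (2 * r - 1) - 1 [ZMOD 3 ^ (2 * r)] := by
  set M : ℕ := (n+1).toNat with hMdef
  have hM : (M:ℤ) = n + 1 := Int.toNat_of_nonneg (by omega)
  have hM0 : 0 < M := by omega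
  rw [lhs_iff n, excl_iff n M hM hM0, ← main_char M hM0]
  constructor
  · rintro ⟨u, v, c, heq, hodd⟩
    exact ⟨u, v, c, by rw [hM]; exact heq, hodd⟩
  · rintro ⟨u, v, c, heq, hodd⟩
    exact ⟨u, v, c, by rw [hM] at heq; exact heq, hodd⟩
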